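/- Let a(x) be a measurable function on the unit disk D² with c₀⁻¹ ≤ a(x) ≤ c₀, let A > 0, p ∈ [2,3], and define S(f) := [(A² + a(x)²|f|²)^{(p-2)/2} / (A² + ‖f‖_p²)^{(p-2)/2}] f. Then for any f ∈ L^p(D²), S maps L^p into L^{p_0} for appropriate exponents; in particular ‖S_z(f)‖_{p_a} ≤ C [1 + (‖f‖_p²/(A²+‖f‖_p²))^{a/2}] ‖f‖_p, where for z = a+ib ∈ D²_{1/2}, S_z(f) := [(A²+a(x)²|f|²)^{1/2}/(A²+‖f‖_p²)^{1/2}]^z f and p_a := p/(1+a). -/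

import Mathlib

open MeasureTheory Metric Real
open scoped ENNReal NNReal RealInnerProductSpace

noncomputable section

abbrev E2 := EuclideanSpace ℝ (Fin 2)
abbrev E3 := EuclideanSpace ℝ (Fin 3)

/-- `i`-th partial derivative. -/
def pd {F : Type*} [NormedAddCommGroup F] [NormedSpace ℝ F]
    (i : Fin 2) (f : E2 → F) (x : E2) : F :=
  fderiv ℝ f x (EuclideanSpace.single i 1)

/-- Laplacian on `ℝ²`. -/
def lap {F : Type*} [NormedAddCommGroup F] [NormedSpace ℝ F]
    (f : E2 → F) (x : E2) : F :=
  pd 0 (pd 0 f) x + pd 1 (pd 1 f) x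

/-- cross product in `ℝ³`. -/
def cross3 (u v : E3) : E3 :=
  (WithLp.equiv 2 (Fin 3 → ℝ)).symm
    (crossProduct (WithLp.equiv 2 (Fin 3 → ℝ) u) (WithLp.equiv 2 (Fin 3 → ℝ) v))

/-- weak `L^p` (Marcinkiewicz) quasinorm of `f` on the set `s`. -/
def wnorm (p : ℝ) (f : E2 → ℝ) (s : Set E2) : ℝ≥0∞ :=
  ⨆ t : ℝ≥0, (t : ℝ≥0∞) * (volume {x ∈ s | (t : ℝ) < |f x|}) ^ (1 / p)

/-- Lorentz `L^{p,q}` quasinorm (with `q = ∞` giving weak `L^p`). -/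
def lorentzNorm (p : ℝ) (q : ℝ≥0∞) (f : E2 → ℝ) (s : Set E2) : ℝ≥0∞ :=
  if q = ⊤ then wnorm p f s
  else (∫⁻ t in Set.Ioi (0 : ℝ),
    (ENNReal.ofReal t * (volume {x ∈ s | t < |f x|}) ^ (1 / p)) ^ q.toReal
      / ENNReal.ofReal t) ^ (1 / q.toReal)

private lemma add_rpow_le' {x y s : ℝ} (hx : 0 ≤ x) (hy : 0 ≤ y) (hs : 0 ≤ s) :
    (x + y) ^ s ≤ 2 ^ s * (x ^ s + y ^ s) := by
  have hmax : x + y ≤ 2 * max x y := by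
    rcases le_total x y with h | h
    · rw [max_eq_right h]; linarith
    · rw [max_eq_left h]; linarith
  have h0 : (0:ℝ) ≤ max x y := le_max_of_le_left hx
  calc (x + y) ^ s ≤ (2 * max x y) ^ s := Real.rpow_le_rpow (by linarith) hmax hs
    _ = 2 ^ s * (max x y) ^ s := Real.mul_rpow (by norm_num) h0
    _ ≤ 2 ^ s * (x ^ s + y ^ s) := by
        apply mul_le_mul_of_nonneg_left _ (Real.rpow_nonneg (by norm_num) s)
        rcases max_cases x y with ⟨he, _⟩ | ⟨he, _⟩ <;> rw [he]
        · exact le_add_of_nonneg_right (Real.rpow_nonneg hy s)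
        · exact le_add_of_nonneg_left (Real.rpow_nonneg hx s)

private lemma pow_interp {t N q' p' : ℝ} (ht : 0 ≤ t) (hN : 0 < N) (hq : 0 ≤ q')
    (hqp : q' ≤ p') : t ^ q' ≤ N ^ q' + N ^ (q' - p') * t ^ p' := by
  rcases le_total t N with h | h
  · have h1 : t ^ q' ≤ N ^ q' := Real.rpow_le_rpow ht h hq
    have h2 : 0 ≤ N ^ (q' - p') * t ^ p' := by positivity
    linarith
  · have ht' : 0 < t := lt_of_lt_of_le hN h
    have h1 : t ^ q' = t ^ (q' - p') * t ^ p' := by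
      rw [← Real.rpow_add ht']; ring_nf
    have h2 : t ^ (q' - p') ≤ N ^ (q' - p') :=
      Real.rpow_le_rpow_of_nonpos hN h (by linarith)
    have h3 : 0 ≤ N ^ q' := by positivity
    calc t ^ q' = t ^ (q' - p') * t ^ p' := h1
      _ ≤ N ^ (q' - p') * t ^ p' :=
          mul_le_mul_of_nonneg_right h2 (Real.rpow_nonneg ht _)
      _ ≤ N ^ q' + N ^ (q' - p') * t ^ p' := le_add_of_nonneg_left h3

private lemma rpow_le_tripple {c s : ℝ} (hc : 0 < c) (hs : |s| ≤ 1) :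
    c ^ s ≤ 1 + c + c⁻¹ := by
  have hs1 : s ≤ 1 := le_of_abs_le hs
  have hs2 : -1 ≤ s := neg_le_of_abs_le hs
  have hcinv : 0 < c⁻¹ := by positivity
  rcases le_total 1 c with h | h
  · rcases le_total 0 s with h2 | h2
    · have := Real.rpow_le_rpow_of_exponent_le h hs1
      rw [Real.rpow_one] at this; linarith
    · have := Real.rpow_le_rpow_of_exponent_le h h2
      rw [Real.rpow_zero] at this; linarith
  · rcases le_total 0 s with h2 | h2
    · have := Real.rpow_le_one hc.le h h2
      linarith
    · have := Real.rpow_le_rpow_of_exponent_ge hc h hs2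
      rw [Real.rpow_neg_one] at this; linarith

set_option maxHeartbeats 2000000 in
/-- Estimate (A-8): the analytic family `S_z` satisfies
`‖S_z(f)‖_{p_a} ≤ C (1 + (‖f‖_p²/(A²+‖f‖_p²))^{a/2}) ‖f‖_p`, `a = Re z`,
`p_a = p/(1+a)`, with `C` independent of `p ∈ [2,3]`, `z ∈ D_{1/2}`, `A` and `f`. -/
theorem Sz_norm_bound :
    ∀ c₀ > (0:ℝ), ∃ C > (0:ℝ), ∀ p ∈ Set.Icc (2:ℝ) 3, ∀ A > (0:ℝ),
      ∀ a : E2 → ℝ, (∀ x ∈ ball (0:E2) 1, c₀⁻¹ ≤ a x ∧ a x ≤ c₀) →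
      ∀ z : ℂ, ‖z‖ < 1/2 →
      ∀ f : E2 → ℝ, Measurable f →
      IntegrableOn (fun x => |f x| ^ p) (ball (0:E2) 1) →
      ∀ Nf : ℝ, Nf = (∫ x in ball (0:E2) 1, |f x| ^ p) ^ (1 / p) →
      ∀ Sz : E2 → ℂ, Sz = (fun x =>
        (((A ^ 2 + (a x) ^ 2 * (f x) ^ 2) / (A ^ 2 + Nf ^ 2) : ℝ) : ℂ) ^ (z / 2) *
          (f x : ℂ)) →
      (∫ x in ball (0:E2) 1, ‖Sz x‖ ^ (p / (1 + z.re))) ^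
          ((1 + z.re) / p) ≤
        C * (1 + (Nf ^ 2 / (A ^ 2 + Nf ^ 2)) ^ (z.re / 2)) * Nf := by
  intro c₀ hc₀
  set Bvol : ℝ := (volume (ball (0:E2) 1)).toReal with hBvol
  have hBvol0 : 0 ≤ Bvol := ENNReal.toReal_nonneg
  refine ⟨8192 * (Bvol + 1) * (1 + c₀ + c₀⁻¹), by positivity, ?_⟩
  intro p hp A hA a ha z hz f hf hint Nf hNf Sz hSz
  obtain ⟨hp2, hp3⟩ := hp
  have hp0 : (0:ℝ) < p := by linarith
  set r := z.re with hr
  have hrabs : |r| < 1/2 := lt_of_le_of_lt (Complex.abs_re_le_norm z) hz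
  have hr1 : -(1/2) < r := neg_lt_of_abs_lt hrabs
  have hr2 : r < 1/2 := lt_of_abs_lt hrabs
  have h1r : (0:ℝ) < 1 + r := by linarith
  set q := p / (1 + r) with hq
  have hq1 : 1 ≤ q := by rw [hq, le_div_iff₀ h1r]; linarith
  have hq0 : (0:ℝ) < q := lt_of_lt_of_le one_pos hq1
  have hq6 : q ≤ 6 := by rw [hq, div_le_iff₀ h1r]; nlinarith
  have hrq : (1 + r) * q = p := by rw [hq]; field_simp
  have hexp : (1 + r) / p = 1 / q := by rw [hq, one_div_div]
  rw [hexp]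
  have hNf0 : 0 ≤ Nf := by
    rw [hNf]
    exact Real.rpow_nonneg
      (integral_nonneg fun x => Real.rpow_nonneg (abs_nonneg _) _) _
  have hden : (0:ℝ) < A ^ 2 + Nf ^ 2 := by positivity
  set D : ℝ := (A ^ 2 + Nf ^ 2) ^ (-(r/2)) with hD
  have hD0 : 0 < D := Real.rpow_pos_of_pos hden _
  set R := Nf ^ 2 / (A ^ 2 + Nf ^ 2) with hRdef
  -- pointwise formula for |Sz x|
  have habs : ∀ x, ‖Sz x‖ =
      ((A ^ 2 + (a x) ^ 2 * (f x) ^ 2) / (A ^ 2 + Nf ^ 2)) ^ (r/2) * |f x| := by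
    intro x
    have hwpos : 0 < (A ^ 2 + (a x) ^ 2 * (f x) ^ 2) / (A ^ 2 + Nf ^ 2) := by positivity
    have hre : (z/2).re = r/2 := by
      rw [show (2:ℂ) = ((2:ℝ):ℂ) by norm_num, Complex.div_ofReal_re]
    rw [hSz]
    simp only [norm_mul, Complex.norm_cpow_eq_rpow_re_of_pos hwpos, hre,
      Complex.norm_real, Real.norm_eq_abs]
  set B : Set E2 := ball (0:E2) 1 with hB
  have hmeasB : MeasurableSet B := measurableSet_ball
  have hBfin : volume B < ⊤ := measure_ball_lt_top
  set I := ∫ x in B, |f x| ^ p with hI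
  have hI0 : 0 ≤ I := integral_nonneg fun x => Real.rpow_nonneg (abs_nonneg _) _
  have hInt0 : 0 ≤ ∫ x in B, ‖Sz x‖ ^ q :=
    integral_nonneg fun x => Real.rpow_nonneg (norm_nonneg _) _
  rcases eq_or_lt_of_le hI0 with hIz | hIpos
  · -- degenerate case f = 0 a.e.
    have hNfz : Nf = 0 := by
      rw [hNf, ← hIz, Real.zero_rpow (by positivity : (1:ℝ)/p ≠ 0)]
    have hae : (fun x => |f x| ^ p) =ᵐ[volume.restrict B] 0 :=
      (integral_eq_zero_iff_of_nonneg
        (fun x => Real.rpow_nonneg (abs_nonneg _) _) hint).mp hIz.symm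
    have hSz0 : (fun x => ‖Sz x‖ ^ q) =ᵐ[volume.restrict B] 0 := by
      filter_upwards [hae] with x hx
      have hfx : |f x| = 0 := by
        have hp' : p ≠ 0 := ne_of_gt hp0
        exact (Real.rpow_eq_zero (abs_nonneg (f x)) hp').mp hx
      show ‖Sz x‖ ^ q = 0
      rw [habs x, hfx, mul_zero, Real.zero_rpow hq0.ne']
    have hLHS : (∫ x in B, ‖Sz x‖ ^ q) = 0 := by
      rw [integral_congr_ae hSz0]; simp
    rw [hLHS, Real.zero_rpow (by positivity : (1:ℝ)/q ≠ 0), hNfz, mul_zero]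
  · -- main case
    have hNfpos : 0 < Nf := by rw [hNf]; exact Real.rpow_pos_of_pos hIpos _
    have hNfp : Nf ^ p = I := by
      rw [hNf, ← Real.rpow_mul hI0]
      rw [show 1 / p * p = 1 by field_simp, Real.rpow_one]
    have hR0 : 0 < R := by rw [hRdef]; positivity
    have key : D * Nf ^ (1 + r) = R ^ (r/2) * Nf := by
      have h1 : Nf ^ (1 + r) = Nf * Nf ^ r := by
        rw [Real.rpow_add hNfpos, Real.rpow_one]
      have h2 : Nf ^ r = (Nf ^ 2) ^ (r/2 : ℝ) := by
        rw [show (Nf ^ 2) = Nf ^ ((2:ℕ):ℝ) from (Real.rpow_natCast Nf 2).symm,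
          ← Real.rpow_mul hNfpos.le]
        congr 1
        push_cast
        ring
      have h3 : R ^ (r/2) = (Nf ^ 2) ^ (r/2 : ℝ) / (A ^ 2 + Nf ^ 2) ^ (r/2) := by
        rw [hRdef]; exact Real.div_rpow (by positivity) hden.le _
      have h4 : (0:ℝ) < (A ^ 2 + Nf ^ 2) ^ (r/2) := Real.rpow_pos_of_pos hden _
      rw [h1, h2, h3, hD, Real.rpow_neg hden.le]
      field_simp
    rcases le_or_gt 0 r with hr0 | hr0
    · -- case 0 ≤ r
      have hr0half : (0:ℝ) ≤ r/2 := by linarith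
      have hqp : q ≤ p := by
        rw [hq, div_le_iff₀ h1r]
        calc p = p * 1 := by ring
          _ ≤ p * (1 + r) := by
              apply mul_le_mul_of_nonneg_left _ hp0.le
              linarith
      have hq1' : (1:ℝ)/q ≤ 1 := (div_le_one hq0).mpr hq1
      set c1 : ℝ := 4096 * Nf ^ q with hc1
      set c2 : ℝ := 4096 * Nf ^ (q - p) + 4096 * (D * c₀ ^ r) ^ q with hc2
      have hA2 : (A^2 : ℝ) ^ (r/2) = A ^ r := by
        rw [show (A^2:ℝ) = A ^ ((2:ℕ):ℝ) from (Real.rpow_natCast A 2).symm,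
          ← Real.rpow_mul hA.le]
        congr 1; push_cast; ring
      have h2q : (2:ℝ)^q ≤ 64 := by
        calc (2:ℝ)^q ≤ 2^(6:ℝ) := Real.rpow_le_rpow_of_exponent_le one_le_two hq6
          _ = 64 := by
              rw [show (6:ℝ) = ((6:ℕ):ℝ) by norm_num, Real.rpow_natCast]; norm_num
      have hDA : D * A ^ r ≤ 1 := by
        have h4 : (0:ℝ) < (A^2+Nf^2)^(r/2) := Real.rpow_pos_of_pos hden _
        have h5 : A ^ r ≤ (A^2+Nf^2)^(r/2) := by
          rw [← hA2]
          exact Real.rpow_le_rpow (by positivity) (by linarith [sq_nonneg Nf]) hr0half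
        rw [hD, Real.rpow_neg hden.le, inv_mul_eq_div]
        exact (div_le_one h4).mpr h5
      have hpt : ∀ x ∈ B, ‖Sz x‖ ^ q ≤ c1 + c2 * |f x| ^ p := by
        intro x hx
        obtain ⟨hax1, hax2⟩ := ha x hx
        set t := |f x| with ht
        have ht0 : (0:ℝ) ≤ t := abs_nonneg _
        have hc2' : (c₀^2 * (f x)^2 : ℝ) ^ (r/2) = c₀ ^ r * t ^ r := by
          rw [show c₀^2*(f x)^2 = (c₀*t)^2 by rw [ht, mul_pow, sq_abs],
            show ((c₀*t)^2:ℝ) = (c₀*t) ^ ((2:ℕ):ℝ) from (Real.rpow_natCast _ 2).symm,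
            ← Real.rpow_mul (by positivity),
            show ((2:ℕ):ℝ) * (r/2) = r by push_cast; ring]
          exact Real.mul_rpow hc₀.le ht0
        have hb1 : ‖Sz x‖ ≤ 2*(D*(A^r*t)) + 2*(D*(c₀^r*t^(r+1))) := by
          rw [habs x, ← ht]
          have hw0 : (0:ℝ) ≤ (A ^ 2 + (a x)^2*(f x)^2) / (A^2+Nf^2) := by positivity
          have hmono : ((A ^ 2 + (a x)^2*(f x)^2) / (A^2+Nf^2)) ^ (r/2)
              ≤ ((A^2 + c₀^2*(f x)^2) / (A^2+Nf^2)) ^ (r/2) := by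
            apply Real.rpow_le_rpow hw0 _ hr0half
            have haxsq : (a x)^2 ≤ c₀^2 :=
              sq_le_sq' (by linarith [inv_pos.mpr hc₀]) hax2
            have hnum : (a x)^2*(f x)^2 ≤ c₀^2*(f x)^2 :=
              mul_le_mul_of_nonneg_right haxsq (sq_nonneg _)
            gcongr
          have hsplit : ((A^2 + c₀^2*(f x)^2) / (A^2+Nf^2)) ^ (r/2)
              = (A^2 + c₀^2*(f x)^2) ^ (r/2) * D := by
            rw [Real.div_rpow (by positivity) hden.le, hD, Real.rpow_neg hden.le,
              div_eq_mul_inv]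
          have hadd : (A^2 + c₀^2*(f x)^2 : ℝ) ^ (r/2) ≤ 2 * (A^r + c₀^r * t^r) := by
            calc (A^2 + c₀^2*(f x)^2 : ℝ) ^ (r/2)
                ≤ 2 ^ (r/2) * ((A^2:ℝ)^(r/2) + (c₀^2*(f x)^2)^(r/2)) :=
                  add_rpow_le' (by positivity) (by positivity) hr0half
              _ ≤ 2 * ((A^2:ℝ)^(r/2) + (c₀^2*(f x)^2)^(r/2)) := by
                  apply mul_le_mul_of_nonneg_right _ (by positivity)
                  calc (2:ℝ)^(r/2) ≤ 2^(1:ℝ) :=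
                      Real.rpow_le_rpow_of_exponent_le one_le_two (by linarith)
                    _ = 2 := Real.rpow_one 2
              _ = 2 * (A^r + c₀^r * t^r) := by rw [hA2, hc2']
          have htpow : t ^ r * t = t ^ (r+1) := by
            rcases eq_or_lt_of_le ht0 with h0 | h0
            · rw [← h0, mul_zero,
                Real.zero_rpow (by linarith : (0:ℝ) < r+1).ne']
            · exact (Real.rpow_add_one h0.ne' r).symm
          calc ((A ^ 2 + (a x)^2*(f x)^2) / (A^2+Nf^2)) ^ (r/2) * t
              ≤ ((A^2 + c₀^2*(f x)^2) / (A^2+Nf^2)) ^ (r/2) * t :=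
                mul_le_mul_of_nonneg_right hmono ht0
            _ = (A^2 + c₀^2*(f x)^2) ^ (r/2) * D * t := by rw [hsplit]
            _ ≤ 2*(A^r + c₀^r*t^r) * D * t :=
                mul_le_mul_of_nonneg_right
                  (mul_le_mul_of_nonneg_right hadd hD0.le) ht0
            _ = 2*(D*(A^r*t)) + 2*(D*(c₀^r*(t^r*t))) := by ring
            _ = 2*(D*(A^r*t)) + 2*(D*(c₀^r*t^(r+1))) := by rw [htpow]
        have hb2 : ‖Sz x‖ ^ q
            ≤ 2^q * ((2*(D*(A^r*t)))^q + (2*(D*(c₀^r*t^(r+1))))^q) := by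
          calc ‖Sz x‖ ^ q ≤ (2*(D*(A^r*t)) + 2*(D*(c₀^r*t^(r+1))))^q :=
              Real.rpow_le_rpow (norm_nonneg _) hb1 hq0.le
            _ ≤ _ := add_rpow_le' (by positivity) (by positivity) hq0.le
        have hterm1 : (2*(D*(A^r*t)))^q ≤ 64 * (Nf^q + Nf^(q-p)*t^p) := by
          have e1 : (2*(D*(A^r*t)))^q = 2^q * (D*A^r)^q * t^q := by
            rw [show 2*(D*(A^r*t)) = (2*(D*A^r))*t by ring,
              Real.mul_rpow (by positivity) ht0,
              Real.mul_rpow (by norm_num) (by positivity)]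
          rw [e1]
          have h6 : (D*A^r)^q ≤ 1 := Real.rpow_le_one (by positivity) hDA hq0.le
          have h7 : t^q ≤ Nf^q + Nf^(q-p)*t^p := pow_interp ht0 hNfpos hq0.le hqp
          calc 2^q * (D*A^r)^q * t^q ≤ (64 * 1) * t^q := by
                apply mul_le_mul_of_nonneg_right _ (Real.rpow_nonneg ht0 q)
                exact mul_le_mul h2q h6 (by positivity) (by norm_num)
            _ = 64 * t^q := by ring
            _ ≤ 64 * (Nf^q + Nf^(q-p)*t^p) :=
                mul_le_mul_of_nonneg_left h7 (by norm_num)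
        have hterm2 : (2*(D*(c₀^r*t^(r+1))))^q ≤ 64 * ((D*c₀^r)^q * t^p) := by
          have e1 : (2*(D*(c₀^r*t^(r+1))))^q = 2^q * (D*c₀^r)^q * (t^(r+1))^q := by
            rw [show 2*(D*(c₀^r*t^(r+1))) = (2*(D*c₀^r))*t^(r+1) by ring,
              Real.mul_rpow (by positivity) (Real.rpow_nonneg ht0 _),
              Real.mul_rpow (by norm_num) (by positivity)]
          have e2 : (t^(r+1))^q = t^p := by
            rw [← Real.rpow_mul ht0, show (r+1)*q = p by rw [← hrq]; ring]
          rw [e1, e2]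
          calc 2^q * (D*c₀^r)^q * t^p ≤ 64 * (D*c₀^r)^q * t^p := by
                apply mul_le_mul_of_nonneg_right
                  (mul_le_mul_of_nonneg_right h2q (by positivity))
                  (Real.rpow_nonneg ht0 _)
            _ = 64 * ((D*c₀^r)^q * t^p) := by ring
        calc ‖Sz x‖ ^ q
            ≤ 2^q * ((2*(D*(A^r*t)))^q + (2*(D*(c₀^r*t^(r+1))))^q) := hb2
          _ ≤ 64 * ((2*(D*(A^r*t)))^q + (2*(D*(c₀^r*t^(r+1))))^q) :=
              mul_le_mul_of_nonneg_right h2q (by positivity)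
          _ ≤ 64 * (64 * (Nf^q + Nf^(q-p)*t^p) + 64 * ((D*c₀^r)^q * t^p)) :=
              mul_le_mul_of_nonneg_left (add_le_add hterm1 hterm2) (by norm_num)
          _ = c1 + c2 * t^p := by rw [hc1, hc2]; ring
      have hconst : IntegrableOn (fun _ : E2 => c1) B :=
        integrableOn_const hBfin.ne
      have hle1 : (∫ x in B, ‖Sz x‖ ^ q)
          ≤ ∫ x in B, (c1 + c2 * |f x| ^ p) := by
        apply integral_mono_of_nonneg
        · exact Filter.Eventually.of_forall fun x =>
            Real.rpow_nonneg (norm_nonneg _) _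
        · exact hconst.add (hint.const_mul c2)
        · exact (ae_restrict_iff' hmeasB).mpr (Filter.Eventually.of_forall hpt)
      have hIeq : (∫ x in B, (c1 + c2 * |f x| ^ p)) = c1 * Bvol + c2 * I := by
        rw [integral_add hconst (hint.const_mul c2), setIntegral_const,
          integral_const_mul c2, smul_eq_mul, ← hI, hBvol, measureReal_def]
        ring
      set u : ℝ := 4096 * (Bvol + 1) * Nf ^ q with hu
      set v : ℝ := 4096 * (D * c₀ ^ r) ^ q * Nf ^ p with hv
      have huv : c1 * Bvol + c2 * I = u + v := by
        rw [hc1, hc2, hu, hv, ← hNfp]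
        have hqq : Nf ^ (q-p) * Nf ^ p = Nf ^ q := by
          rw [← Real.rpow_add hNfpos]; ring_nf
        linear_combination (4096:ℝ) * hqq
      have hu0 : (0:ℝ) ≤ u := by positivity
      have hv0 : (0:ℝ) ≤ v := by positivity
      have hmain : (∫ x in B, ‖Sz x‖ ^ q) ^ ((1:ℝ)/q)
          ≤ (u + v) ^ ((1:ℝ)/q) := by
        apply Real.rpow_le_rpow hInt0 _ (by positivity)
        calc (∫ x in B, ‖Sz x‖ ^ q)
            ≤ ∫ x in B, (c1 + c2 * |f x| ^ p) := hle1
          _ = c1 * Bvol + c2 * I := hIeq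
          _ = u + v := huv
      have hsplit2 : (u+v)^((1:ℝ)/q) ≤ 2 * (u^((1:ℝ)/q) + v^((1:ℝ)/q)) := by
        calc (u+v)^((1:ℝ)/q) ≤ 2^((1:ℝ)/q) * (u^((1:ℝ)/q) + v^((1:ℝ)/q)) :=
            add_rpow_le' hu0 hv0 (by positivity)
          _ ≤ 2 * (u^((1:ℝ)/q) + v^((1:ℝ)/q)) := by
              apply mul_le_mul_of_nonneg_right _ (by positivity)
              calc (2:ℝ)^((1:ℝ)/q) ≤ 2^(1:ℝ) :=
                  Real.rpow_le_rpow_of_exponent_le one_le_two hq1'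
                _ = 2 := Real.rpow_one 2
      have hup : u^((1:ℝ)/q) ≤ 4096*(Bvol+1) * Nf := by
        rw [hu, Real.mul_rpow (by positivity) (Real.rpow_nonneg hNf0 q)]
        have e1 : (Nf^q)^((1:ℝ)/q) = Nf := by
          rw [← Real.rpow_mul hNf0, mul_one_div, div_self hq0.ne', Real.rpow_one]
        rw [e1]
        apply mul_le_mul_of_nonneg_right _ hNf0
        calc (4096*(Bvol+1))^((1:ℝ)/q) ≤ (4096*(Bvol+1))^(1:ℝ) :=
            Real.rpow_le_rpow_of_exponent_le (by linarith only [hBvol0]) hq1'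
          _ = 4096*(Bvol+1) := Real.rpow_one _
      have hvp : v^((1:ℝ)/q) ≤ 4096 * c₀^r * (R^(r/2) * Nf) := by
        rw [hv, Real.mul_rpow (by positivity) (Real.rpow_nonneg hNf0 p),
          Real.mul_rpow (by norm_num) (by positivity)]
        have e1 : ((D*c₀^r)^q)^((1:ℝ)/q) = D*c₀^r := by
          rw [← Real.rpow_mul (by positivity), mul_one_div, div_self hq0.ne',
            Real.rpow_one]
        have hpq : p / q = 1 + r := by
          rw [eq_comm, eq_div_iff hq0.ne']; exact hrq
        have e2 : (Nf^p)^((1:ℝ)/q) = Nf^(1+r) := by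
          rw [← Real.rpow_mul hNf0, mul_one_div, hpq]
        rw [e1, e2]
        calc (4096:ℝ)^((1:ℝ)/q) * (D*c₀^r) * Nf^(1+r)
            ≤ 4096 * (D*c₀^r) * Nf^(1+r) := by
              apply mul_le_mul_of_nonneg_right
                (mul_le_mul_of_nonneg_right _ (by positivity))
                (Real.rpow_nonneg hNf0 _)
              calc (4096:ℝ)^((1:ℝ)/q) ≤ 4096^(1:ℝ) :=
                  Real.rpow_le_rpow_of_exponent_le (by norm_num) hq1'
                _ = 4096 := Real.rpow_one _
          _ = 4096 * c₀^r * (D * Nf^(1+r)) := by ring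
          _ = 4096 * c₀^r * (R^(r/2) * Nf) := by rw [key]
      have hcr : c₀ ^ r ≤ 1 + c₀ + c₀⁻¹ :=
        rpow_le_tripple hc₀ (by rw [abs_of_nonneg hr0]; linarith)
      have hP0 : (0:ℝ) ≤ R^(r/2) := Real.rpow_nonneg hR0.le _
      have h8 : (1:ℝ) ≤ 1 + c₀ + c₀⁻¹ := by
        have := inv_pos.mpr hc₀; linarith
      have h9 : (1:ℝ) ≤ Bvol + 1 := by linarith
      calc (∫ x in B, ‖Sz x‖ ^ q) ^ ((1:ℝ)/q)
          ≤ (u+v)^((1:ℝ)/q) := hmain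
        _ ≤ 2 * (u^((1:ℝ)/q) + v^((1:ℝ)/q)) := hsplit2
        _ ≤ 2 * ((4096*(Bvol+1) * Nf) + 4096 * c₀^r * (R^(r/2) * Nf)) :=
            mul_le_mul_of_nonneg_left (add_le_add hup hvp) (by norm_num)
        _ ≤ 8192 * (Bvol + 1) * (1 + c₀ + c₀⁻¹) * (1 + R ^ (r/2)) * Nf := by
            have hPN : (0:ℝ) ≤ R^(r/2) * Nf := mul_nonneg hP0 hNf0
            have t1 : 8192*(Bvol+1)*Nf ≤ 8192*(Bvol+1)*(1+c₀+c₀⁻¹)*Nf := by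
              linarith only [mul_le_mul_of_nonneg_left h8
                (by positivity : (0:ℝ) ≤ 8192*(Bvol+1)*Nf)]
            have e : c₀^r ≤ (Bvol+1)*(1+c₀+c₀⁻¹) := by
              calc c₀^r ≤ 1 + c₀ + c₀⁻¹ := hcr
                _ ≤ (Bvol+1)*(1+c₀+c₀⁻¹) := le_mul_of_one_le_left (by linarith only [h8]) h9
            have t2 : 8192 * c₀^r * (R^(r/2)*Nf)
                ≤ 8192*(Bvol+1)*(1+c₀+c₀⁻¹)*(R^(r/2)*Nf) := by
              linarith only [mul_le_mul_of_nonneg_right e hPN]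
            linarith only [t1, t2]
    · -- case r < 0
      have hr0' : r/2 ≤ 0 := by linarith
      have hq1' : (1:ℝ)/q ≤ 1 := (div_le_one hq0).mpr hq1
      set K : ℝ := (D * c₀ ^ (-r)) ^ q with hK
      have hK0 : (0:ℝ) ≤ K := by positivity
      have hci : (0:ℝ) < c₀⁻¹ := by positivity
      have hpt : ∀ x ∈ B, ‖Sz x‖ ^ q ≤ K * |f x| ^ p := by
        intro x hx
        obtain ⟨hax1, hax2⟩ := ha x hx
        set t := |f x| with ht
        have ht0 : (0:ℝ) ≤ t := abs_nonneg _
        rcases eq_or_lt_of_le ht0 with h0 | h0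
        · rw [habs x, ← ht, ← h0, mul_zero, Real.zero_rpow hq0.ne']
          positivity
        · have hwlow : (c₀⁻¹*t)^2/(A^2+Nf^2)
              ≤ (A ^ 2 + (a x)^2*(f x)^2)/(A^2+Nf^2) := by
            have h1 : (c₀⁻¹)^2 ≤ (a x)^2 := pow_le_pow_left₀ hci.le hax1 2
            have h2 : (c₀⁻¹)^2*(f x)^2 ≤ (a x)^2*(f x)^2 :=
              mul_le_mul_of_nonneg_right h1 (sq_nonneg _)
            gcongr
            have h3 : (c₀⁻¹*t)^2 = (c₀⁻¹)^2*(f x)^2 := by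
              rw [ht, mul_pow, sq_abs]
            linarith only [h2, h3, sq_nonneg A]
          have hlowpos : (0:ℝ) < (c₀⁻¹*t)^2/(A^2+Nf^2) := by positivity
          have hmono : ((A ^ 2 + (a x)^2*(f x)^2)/(A^2+Nf^2))^(r/2)
              ≤ ((c₀⁻¹*t)^2/(A^2+Nf^2))^(r/2) :=
            Real.rpow_le_rpow_of_nonpos hlowpos hwlow hr0'
          have e1 : ((c₀⁻¹*t)^2/(A^2+Nf^2))^(r/2) = c₀^(-r) * t^r * D := by
            rw [Real.div_rpow (by positivity) hden.le, hD, Real.rpow_neg hden.le,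
              div_eq_mul_inv]
            congr 1
            rw [show ((c₀⁻¹*t)^2:ℝ) = (c₀⁻¹*t) ^ ((2:ℕ):ℝ) from
                (Real.rpow_natCast _ 2).symm,
              ← Real.rpow_mul (by positivity),
              show ((2:ℕ):ℝ)*(r/2) = r by push_cast; ring,
              Real.mul_rpow hci.le ht0, Real.inv_rpow hc₀.le,
              ← Real.rpow_neg hc₀.le]
          have hb1 : ‖Sz x‖ ≤ D * c₀^(-r) * t^(r+1) := by
            rw [habs x, ← ht]
            calc ((A ^ 2 + (a x)^2*(f x)^2)/(A^2+Nf^2))^(r/2) * t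
                ≤ ((c₀⁻¹*t)^2/(A^2+Nf^2))^(r/2) * t :=
                  mul_le_mul_of_nonneg_right hmono ht0
              _ = D * c₀^(-r) * (t^r*t) := by rw [e1]; ring
              _ = D * c₀^(-r) * t^(r+1) := by
                  rw [Real.rpow_add_one h0.ne' r]
          calc ‖Sz x‖ ^ q ≤ (D * c₀^(-r) * t^(r+1))^q :=
              Real.rpow_le_rpow (norm_nonneg _) hb1 hq0.le
            _ = K * t^p := by
                rw [Real.mul_rpow (by positivity) (Real.rpow_nonneg ht0 _), hK,
                  ← Real.rpow_mul ht0, show (r+1)*q = p by rw [← hrq]; ring]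
      have hle1 : (∫ x in B, ‖Sz x‖ ^ q) ≤ K * I := by
        have h5 : (∫ x in B, ‖Sz x‖ ^ q) ≤ ∫ x in B, K * |f x| ^ p := by
          apply integral_mono_of_nonneg
          · exact Filter.Eventually.of_forall fun x =>
              Real.rpow_nonneg (norm_nonneg _) _
          · exact hint.const_mul K
          · exact (ae_restrict_iff' hmeasB).mpr (Filter.Eventually.of_forall hpt)
        rwa [integral_const_mul K, ← hI] at h5
      have hpq : p / q = 1 + r := by
        rw [eq_comm, eq_div_iff hq0.ne']; exact hrq
      have hfin : (∫ x in B, ‖Sz x‖ ^ q) ^ ((1:ℝ)/q)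
          ≤ c₀^(-r) * (R^(r/2) * Nf) := by
        calc (∫ x in B, ‖Sz x‖ ^ q) ^ ((1:ℝ)/q)
            ≤ (K * Nf^p) ^ ((1:ℝ)/q) :=
              Real.rpow_le_rpow hInt0 (by rw [hNfp]; exact hle1) (by positivity)
          _ = (D * c₀^(-r)) * Nf^(1+r) := by
              rw [Real.mul_rpow hK0 (Real.rpow_nonneg hNf0 _), hK,
                ← Real.rpow_mul (by positivity), mul_one_div, div_self hq0.ne',
                Real.rpow_one, ← Real.rpow_mul hNf0, mul_one_div, hpq]
          _ = c₀^(-r) * (D * Nf^(1+r)) := by ring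
          _ = c₀^(-r) * (R^(r/2) * Nf) := by rw [key]
      have hcr : c₀ ^ (-r) ≤ 1 + c₀ + c₀⁻¹ :=
        rpow_le_tripple hc₀ (by rw [abs_neg]; linarith [le_of_lt hrabs])
      have hP0 : (0:ℝ) ≤ R^(r/2) := Real.rpow_nonneg hR0.le _
      have h8 : (1:ℝ) ≤ 1 + c₀ + c₀⁻¹ := by linarith [hci]
      have h9 : (1:ℝ) ≤ Bvol + 1 := by linarith
      have hPN : (0:ℝ) ≤ R^(r/2) * Nf := mul_nonneg hP0 hNf0
      calc (∫ x in B, ‖Sz x‖ ^ q) ^ ((1:ℝ)/q)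
          ≤ c₀^(-r) * (R^(r/2) * Nf) := hfin
        _ ≤ ((Bvol+1)*(1+c₀+c₀⁻¹)) * (R^(r/2) * Nf) := by
            apply mul_le_mul_of_nonneg_right _ hPN
            calc c₀^(-r) ≤ 1 + c₀ + c₀⁻¹ := hcr
              _ ≤ (Bvol+1)*(1+c₀+c₀⁻¹) :=
                  le_mul_of_one_le_left (by linarith only [h8]) h9
        _ ≤ 8192 * (Bvol + 1) * (1 + c₀ + c₀⁻¹) * (1 + R ^ (r/2)) * Nf := by
            have t3 : ((Bvol+1)*(1+c₀+c₀⁻¹)) * (R^(r/2) * Nf)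
                ≤ 8192 * ((Bvol+1)*(1+c₀+c₀⁻¹)) * (R^(r/2) * Nf) := by
              have := mul_nonneg (mul_nonneg (by linarith only [h9] : (0:ℝ) ≤ Bvol+1)
                (by linarith only [h8] : (0:ℝ) ≤ 1+c₀+c₀⁻¹)) hPN
              linarith only [this]
            have t4 : (0:ℝ) ≤ 8192 * (Bvol + 1) * (1 + c₀ + c₀⁻¹) * Nf := by positivity
            linarith only [t3, t4]


end
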